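/- arXiv:1511.01402 — 2 statements merged into one kernel-verified Lean document; each statement's English description precedes it below -/
import Mathlib

section
/- Let α₁, α₂ ∈ (0,1) and T ≥ 3 a natural number, and set a_{i,j} = -(-1)^{j+1} binom(α_i, j+1). Define g₀ = a_{1,T}·a_{2,T} and g₂ = a_{1,T}·a_{2,T-2} + a_{1,T-1}·a_{2,T-1} + a_{1,T-2}·a_{2,T}. Then g₂ = g₀·(T+1)·(â + b̂ + ĉ), where â = T/((α₂-T)(α₂-T+1)), b̂ = (T+1)/((α₁-T)(α₂-T)), and ĉ = T/((α₁-T)(α₁-T+1)). -/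
/-- Generalized binomial coefficient binom(α, k) = α(α-1)⋯(α-k+1)/k!. -/
noncomputable def genBinom (α : ℝ) (k : ℕ) : ℝ :=
  (∏ m ∈ Finset.range k, (α - m)) / (Nat.factorial k)

/-- Grünwald-Letnikov state-space coefficient a_{i,j} = -(-1)^{j+1} binom(α_i, j+1). -/
noncomputable def aCoeff (α : ℝ) (j : ℕ) : ℝ := -((-1 : ℝ) ^ (j + 1)) * genBinom α (j + 1)

lemma aCoeff_step (α : ℝ) (n : ℕ) :
    ((n : ℝ) + 2) * aCoeff α (n + 1) = ((n : ℝ) + 1 - α) * aCoeff α n := by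
  have hf : ((Nat.factorial (n + 1) : ℝ)) ≠ 0 := by positivity
  simp only [aCoeff, genBinom, Finset.prod_range_succ, Nat.factorial_succ]
  push_cast
  field_simp
  ring

theorem g2_identity (α₁ α₂ : ℝ) (h₁ : α₁ ∈ Set.Ioo (0:ℝ) 1) (h₂ : α₂ ∈ Set.Ioo (0:ℝ) 1)
    (T : ℕ) (hT : 3 ≤ T) :
    aCoeff α₁ T * aCoeff α₂ (T - 2) + aCoeff α₁ (T - 1) * aCoeff α₂ (T - 1) +
        aCoeff α₁ (T - 2) * aCoeff α₂ T =
      (aCoeff α₁ T * aCoeff α₂ T) * (T + 1) *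
        (T / ((α₂ - T) * (α₂ - T + 1)) + (T + 1) / ((α₁ - T) * (α₂ - T)) +
          T / ((α₁ - T) * (α₁ - T + 1))) := by
  obtain ⟨n, rfl⟩ : ∃ n, T = n + 3 := ⟨T - 3, by omega⟩
  obtain ⟨h1a, h1b⟩ := h₁
  obtain ⟨h2a, h2b⟩ := h₂
  have hn : (0:ℝ) ≤ (n : ℝ) := Nat.cast_nonneg n
  have d1 : (n : ℝ) + 3 - α₁ ≠ 0 := by nlinarith
  have d2 : (n : ℝ) + 2 - α₁ ≠ 0 := by nlinarith
  have d3 : (n : ℝ) + 3 - α₂ ≠ 0 := by nlinarith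
  have d4 : (n : ℝ) + 2 - α₂ ≠ 0 := by nlinarith
  have r1 := aCoeff_step α₁ (n + 2)
  have r2 := aCoeff_step α₁ (n + 1)
  have s1 := aCoeff_step α₂ (n + 2)
  have s2 := aCoeff_step α₂ (n + 1)
  push_cast at r1 r2 s1 s2
  have hB : aCoeff α₁ (n + 2) = ((n : ℝ) + 4) * aCoeff α₁ (n + 3) / ((n : ℝ) + 3 - α₁) := by
    rw [eq_div_iff d1]; linarith
  have hC : aCoeff α₁ (n + 1) =
      ((n : ℝ) + 3) * aCoeff α₁ (n + 2) / ((n : ℝ) + 2 - α₁) := by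
    rw [eq_div_iff d2]; linarith
  have hE : aCoeff α₂ (n + 2) = ((n : ℝ) + 4) * aCoeff α₂ (n + 3) / ((n : ℝ) + 3 - α₂) := by
    rw [eq_div_iff d3]; linarith
  have hF : aCoeff α₂ (n + 1) =
      ((n : ℝ) + 3) * aCoeff α₂ (n + 2) / ((n : ℝ) + 2 - α₂) := by
    rw [eq_div_iff d4]; linarith
  have e1 : n + 3 - 1 = n + 2 := rfl
  have e2 : n + 3 - 2 = n + 1 := rfl
  rw [e1, e2, hC, hF, hB, hE]
  have d1' : α₁ - ((n : ℝ) + 3) ≠ 0 := fun h => d1 (by linarith [sub_eq_zero.mp h])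
  have d2' : α₁ - ((n : ℝ) + 3) + 1 ≠ 0 := fun h => d2 (by linarith)
  have d3' : α₂ - ((n : ℝ) + 3) ≠ 0 := fun h => d3 (by linarith [sub_eq_zero.mp h])
  have d4' : α₂ - ((n : ℝ) + 3) + 1 ≠ 0 := fun h => d4 (by linarith)
  push_cast
  field_simp
  ring
end

section
/- Let T ≥ 2 be a natural number, g₀ ≠ 0 a real number, and define F : (0,1)² → ℝ² by F(α₁,α₂) = (−g₀(T+1)(1/(α₁−T) + 1/(α₂−T)), g₀(T+1)(T/((α₂−T)(α₂−T+1)) + (T+1)/((α₁−T)(α₂−T)) + T/((α₁−T)(α₁−T+1)))). Then for any (α₁,α₂) ∈ (0,1)², the fiber F⁻¹(F(α₁,α₂)) contains at most the two points (α₁,α₂) and (α₂,α₁); in particular each fiber of F is finite. -/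
set_option maxHeartbeats 1000000

private lemma aux_ineq (t S D D' : ℝ) (ht : 2 ≤ t) (hS0 : 0 < S) (hS2 : S < 2)
    (hD : D ≤ S^2/4) (hD' : D' ≤ S^2/4) (hD'pos : 0 < D') :
    (t+1)*D*D' < t*S := by
  have ht1 : (0:ℝ) < t + 1 := by linarith
  have hcube : S^3 < 8 := by
    nlinarith [mul_pos (show (0:ℝ) < 2 - S by linarith) (show (0:ℝ) < S^2+2*S+4 by positivity)]
  have hB : (t+1)*S^3 < 16*t := by nlinarith
  have hC : (t+1)*S^3*S < 16*t*S := mul_lt_mul_of_pos_right hB hS0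
  have hA : D*D' ≤ (S^2/4)*(S^2/4) := mul_le_mul hD hD' (le_of_lt hD'pos) (by positivity)
  nlinarith [mul_le_mul_of_nonneg_left hA (le_of_lt ht1)]

/-- From equal symmetric sums and equal second coefficient (in u-coordinates),
the products agree. -/
private lemma prod_eq (t : ℝ) (ht : 2 ≤ t) (u₁ u₂ v₁ v₂ : ℝ)
    (hu₁ : -1 < u₁) (hu₁' : u₁ < 0) (hu₂ : -1 < u₂) (hu₂' : u₂ < 0)
    (hv₁ : -1 < v₁) (hv₁' : v₁ < 0) (hv₂ : -1 < v₂) (hv₂' : v₂ < 0)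
    (hs : u₁ + u₂ = v₁ + v₂)
    (hE : t*u₁^2/(1+u₁) + t*u₂^2/(1+u₂) + (t+1)*u₁*u₂
        = t*v₁^2/(1+v₁) + t*v₂^2/(1+v₂) + (t+1)*v₁*v₂) :
    u₁ * u₂ = v₁ * v₂ := by
  have hx₁ : (0:ℝ) < 1 + u₁ := by linarith
  have hx₂ : (0:ℝ) < 1 + u₂ := by linarith
  have hy₁ : (0:ℝ) < 1 + v₁ := by linarith
  have hy₂ : (0:ℝ) < 1 + v₂ := by linarith
  have hfac : (u₁*u₂ - v₁*v₂) *
      ((t+1)*((1+u₁)*(1+u₂))*((1+v₁)*(1+v₂)) - t*(2+u₁+u₂)) = 0 := by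
    have hv2 : v₂ = u₁ + u₂ - v₁ := by linarith
    subst hv2
    field_simp at hE
    linear_combination hE
  have hlt : (t+1)*((1+u₁)*(1+u₂))*((1+v₁)*(1+v₂)) < t*(2+u₁+u₂) := by
    apply aux_ineq t (2+u₁+u₂) _ _ ht (by linarith) (by linarith)
    · nlinarith [sq_nonneg (u₁ - u₂)]
    · nlinarith [sq_nonneg (v₁ - v₂), hs]
    · exact mul_pos hy₁ hy₂
  rcases mul_eq_zero.1 hfac with h | h
  · linarith
  · linarith

/-- Key identifiability lemma in the shifted variables a = α₁ - T, etc. -/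
private lemma key (t : ℝ) (ht : 2 ≤ t) (a b c d : ℝ)
    (ha : a < -1) (hb : b < -1) (hc : c < -1) (hd : d < -1)
    (H1 : 1/a + 1/b = 1/c + 1/d)
    (H2 : t/(b*(b+1)) + (t+1)/(a*b) + t/(a*(a+1))
        = t/(d*(d+1)) + (t+1)/(c*d) + t/(c*(c+1))) :
    (a = c ∧ b = d) ∨ (a = d ∧ b = c) := by
  have ha0 : a ≠ 0 := by linarith
  have hb0 : b ≠ 0 := by linarith
  have hc0 : c ≠ 0 := by linarith
  have hd0 : d ≠ 0 := by linarith
  have ha1 : a + 1 ≠ 0 := by intro h; nlinarith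
  have hb1 : b + 1 ≠ 0 := by intro h; nlinarith
  have hc1 : c + 1 ≠ 0 := by intro h; nlinarith
  have hd1 : d + 1 ≠ 0 := by intro h; nlinarith
  -- convert to u-coordinates
  have conv : ∀ x : ℝ, x ≠ 0 → x + 1 ≠ 0 → t/(x*(x+1)) = t*(1/x)^2/(1+1/x) := by
    intro x hx hx1
    field_simp
  have hrange : ∀ x : ℝ, x < -1 → -1 < 1/x ∧ 1/x < 0 := by
    intro x hx
    have hx0 : x < 0 := by linarith
    constructor
    · rw [lt_div_iff_of_neg hx0]; linarith
    · exact div_neg_of_pos_of_neg one_pos hx0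
  obtain ⟨hua, hua'⟩ := hrange a ha
  obtain ⟨hub, hub'⟩ := hrange b hb
  obtain ⟨huc, huc'⟩ := hrange c hc
  obtain ⟨hud, hud'⟩ := hrange d hd
  have hE : t*(1/a)^2/(1+1/a) + t*(1/b)^2/(1+1/b) + (t+1)*(1/a)*(1/b)
          = t*(1/c)^2/(1+1/c) + t*(1/d)^2/(1+1/d) + (t+1)*(1/c)*(1/d) := by
    rw [← conv a ha0 ha1, ← conv b hb0 hb1, ← conv c hc0 hc1, ← conv d hd0 hd1]
    have habm : ∀ x y : ℝ, (t+1)*(1/x)*(1/y) = (t+1)/(x*y) := by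
      intro x y; rw [mul_one_div, mul_one_div, div_div]
    calc t / (a * (a + 1)) + t / (b * (b + 1)) + (t + 1) * (1/a) * (1/b)
        = t/(b*(b+1)) + (t+1)/(a*b) + t/(a*(a+1)) := by rw [habm]; ring
      _ = t/(d*(d+1)) + (t+1)/(c*d) + t/(c*(c+1)) := H2
      _ = t / (c * (c + 1)) + t / (d * (d + 1)) + (t + 1) * (1/c) * (1/d) := by
          rw [habm]; ring
  have hp : (1/a) * (1/b) = (1/c) * (1/d) :=
    prod_eq t ht (1/a) (1/b) (1/c) (1/d) hua hua' hub hub' huc huc' hud hud' H1 hE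
  have hquad : (1/a - 1/c) * (1/a - 1/d) = 0 := by
    linear_combination (1/a) * H1 - hp
  have inv_inj : ∀ x y : ℝ, x ≠ 0 → y ≠ 0 → 1/x = 1/y → x = y := by
    intro x y hx hy h
    field_simp at h
    exact h.symm
  rcases mul_eq_zero.1 hquad with h | h
  · left
    have hac : a = c := inv_inj a c ha0 hc0 (by linarith)
    refine ⟨hac, inv_inj b d hb0 hd0 ?_⟩
    have : 1/b = 1/d := by
      have : 1/a = 1/c := by linarith
      linarith [H1, this]
    exact this
  · right
    have had : a = d := inv_inj a d ha0 hd0 (by linarith)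
    refine ⟨had, inv_inj b c hb0 hc0 ?_⟩
    have : 1/a = 1/d := by linarith
    linarith [H1]

/-- The map (α₁, α₂) ↦ (g₁, g₂) expressing the transfer-function coefficients of the
two-CPE fractional-order model in terms of the fractional orders, for known g₀. -/
noncomputable def twoCPEMap (T : ℕ) (g₀ : ℝ) (p : ℝ × ℝ) : ℝ × ℝ :=
  (-g₀ * (T + 1) * (1 / (p.1 - T) + 1 / (p.2 - T)),
   g₀ * (T + 1) * (T / ((p.2 - T) * (p.2 - T + 1)) + (T + 1) / ((p.1 - T) * (p.2 - T)) +
     T / ((p.1 - T) * (p.1 - T + 1))))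

theorem twoCPEMap_fibers_finite (T : ℕ) (hT : 2 ≤ T) (g₀ : ℝ) (hg₀ : g₀ ≠ 0)
    (α₁ α₂ : ℝ) (h₁ : α₁ ∈ Set.Ioo (0:ℝ) 1) (h₂ : α₂ ∈ Set.Ioo (0:ℝ) 1) :
    (∀ β : ℝ × ℝ, β.1 ∈ Set.Ioo (0:ℝ) 1 → β.2 ∈ Set.Ioo (0:ℝ) 1 →
      twoCPEMap T g₀ β = twoCPEMap T g₀ (α₁, α₂) → β = (α₁, α₂) ∨ β = (α₂, α₁)) ∧
    {β : ℝ × ℝ | β.1 ∈ Set.Ioo (0:ℝ) 1 ∧ β.2 ∈ Set.Ioo (0:ℝ) 1 ∧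
      twoCPEMap T g₀ β = twoCPEMap T g₀ (α₁, α₂)}.Finite := by
  have htR : (2:ℝ) ≤ (T:ℝ) := by exact_mod_cast hT
  have main : ∀ β : ℝ × ℝ, β.1 ∈ Set.Ioo (0:ℝ) 1 → β.2 ∈ Set.Ioo (0:ℝ) 1 →
      twoCPEMap T g₀ β = twoCPEMap T g₀ (α₁, α₂) → β = (α₁, α₂) ∨ β = (α₂, α₁) := by
    intro β hβ₁ hβ₂ heq
    rw [twoCPEMap, twoCPEMap, Prod.mk.injEq] at heq
    obtain ⟨e1, e2⟩ := heq
    have hne1 : -g₀ * ((T:ℝ) + 1) ≠ 0 := by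
      apply mul_ne_zero (neg_ne_zero.mpr hg₀); positivity
    have hne2 : g₀ * ((T:ℝ) + 1) ≠ 0 := by
      apply mul_ne_zero hg₀; positivity
    have H1 := mul_left_cancel₀ hne1 e1
    have H2 := mul_left_cancel₀ hne2 e2
    have hshift : ∀ x : ℝ, x ∈ Set.Ioo (0:ℝ) 1 → x - (T:ℝ) < -1 := by
      intro x hx
      have := hx.2
      linarith
    have ha := hshift _ hβ₁
    have hb := hshift _ hβ₂
    have hc := hshift _ h₁
    have hd := hshift _ h₂
    have hkey := key (T:ℝ) htR (β.1 - T) (β.2 - T) (α₁ - T) (α₂ - T) ha hb hc hd H1 H2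
    rcases hkey with ⟨hA, hB⟩ | ⟨hA, hB⟩
    · left
      have h1 : β.1 = α₁ := by linarith
      have h2 : β.2 = α₂ := by linarith
      exact Prod.ext h1 h2
    · right
      have h1 : β.1 = α₂ := by linarith
      have h2 : β.2 = α₁ := by linarith
      exact Prod.ext h1 h2
  refine ⟨main, ?_⟩
  apply Set.Finite.subset ((Set.finite_singleton ((α₂:ℝ), (α₁:ℝ))).insert (α₁, α₂))
  intro β hβ
  obtain ⟨hb1, hb2, hb3⟩ := hβ
  rcases main β hb1 hb2 hb3 with h | h
  · exact Set.mem_insert_iff.mpr (Or.inl h)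
  · exact Set.mem_insert_iff.mpr (Or.inr h)
end
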